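/- arXiv:1602.05908 — 3 statements merged into one kernel-verified Lean document; each statement's English description precedes it below -/
import Mathlib

section
/- Let f : ℝⁿ → ℝ be three times continuously differentiable with L-Lipschitz third derivative. If x is a critical point with ∇f(x) = 0, ∇²f(x) positive semidefinite, and ∇³f(x)(u,u,u) = 0 for every u in the kernel of ∇²f(x), then x is a third order local minimum: there exist constants C, ε > 0 such that f(y) ≥ f(x) - C‖y-x‖⁴ for all y with ‖y-x‖ ≤ ε. -/
open Set Finset

noncomputable def frob3 {n : ℕ}
    (T : ContinuousMultilinearMap ℝ (fun _ : Fin 3 => EuclideanSpace ℝ (Fin n)) ℝ) : ℝ :=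
  Real.sqrt (∑ i : Fin n, ∑ j : Fin n, ∑ k : Fin n,
    (T ![EuclideanSpace.single i 1, EuclideanSpace.single j 1, EuclideanSpace.single k 1]) ^ 2)

section Aux

variable {n : ℕ}

lemma frob3_bound {n : ℕ}
    (S : ContinuousMultilinearMap ℝ (fun _ : Fin 3 => EuclideanSpace ℝ (Fin n)) ℝ)
    (v : EuclideanSpace ℝ (Fin n)) :
    |S ![v, v, v]| ≤ frob3 S * ‖v‖ ^ 3 := by
  classical
  set e : Fin n → EuclideanSpace ℝ (Fin n) := fun i => EuclideanSpace.single i 1 with he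
  have hv : v = ∑ j : Fin n, v j • e j := by
    ext i
    rw [WithLp.ofLp_sum, Finset.sum_apply]
    simp [he, EuclideanSpace.single_apply]
  have hvfun : (![v, v, v] : Fin 3 → EuclideanSpace ℝ (Fin n))
      = fun _ => ∑ j : Fin n, v j • e j := by
    funext i; fin_cases i <;> simpa using hv
  have expand : S ![v, v, v]
      = ∑ r ∈ Fintype.piFinset (fun _ : Fin 3 => (univ : Finset (Fin n))),
          (∏ i : Fin 3, v (r i)) * S (fun i => e (r i)) := by
    rw [hvfun]
    rw [show (fun _ : Fin 3 => ∑ j : Fin n, v j • e j)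
        = fun i : Fin 3 => ∑ j ∈ (univ : Finset (Fin n)), (fun _ (jj : Fin n) => v jj • e jj) i j
        from rfl]
    rw [S.map_sum_finset]
    congr 1; funext r
    have := S.toMultilinearMap.map_smul_univ (fun i => v (r i)) (fun i => e (r i))
    simpa [smul_eq_mul] using this
  have CS : (∑ r ∈ Fintype.piFinset (fun _ : Fin 3 => (univ : Finset (Fin n))),
        (∏ i : Fin 3, v (r i)) * S (fun i => e (r i))) ^ 2
      ≤ (∑ r ∈ Fintype.piFinset (fun _ : Fin 3 => (univ : Finset (Fin n))),
          (∏ i : Fin 3, v (r i)) ^ 2)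
        * (∑ r ∈ Fintype.piFinset (fun _ : Fin 3 => (univ : Finset (Fin n))),
          (S (fun i => e (r i))) ^ 2) :=
    Finset.sum_mul_sq_le_sq_mul_sq _ _ _
  have hA : (∑ r ∈ Fintype.piFinset (fun _ : Fin 3 => (univ : Finset (Fin n))),
      (∏ i : Fin 3, v (r i)) ^ 2) = (∑ j : Fin n, (v j) ^ 2) ^ 3 := by
    rw [show ((∑ j : Fin n, (v j) ^ 2) ^ 3) = ∏ _i : Fin 3, (∑ j : Fin n, (v j)^2) by
      simp [Finset.prod_const]]
    rw [Finset.prod_univ_sum]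
    congr 1; funext r
    rw [← Finset.prod_pow]
  have hB : (∑ r ∈ Fintype.piFinset (fun _ : Fin 3 => (univ : Finset (Fin n))),
      (S (fun i => e (r i))) ^ 2)
      = ∑ i : Fin n, ∑ j : Fin n, ∑ k : Fin n, (S ![e i, e j, e k]) ^ 2 := by
    have hpi : Fintype.piFinset (fun _ : Fin 3 => (univ : Finset (Fin n)))
        = (univ : Finset (Fin 3 → Fin n)) := by
      ext r; simp
    rw [hpi]
    let eqv : (Fin n × Fin n × Fin n) ≃ (Fin 3 → Fin n) :=
      { toFun := fun p => ![p.1, p.2.1, p.2.2]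
        invFun := fun r => (r 0, r 1, r 2)
        left_inv := fun p => rfl
        right_inv := fun r => by funext i; fin_cases i <;> rfl }
    rw [← Equiv.sum_comp eqv (fun r => (S (fun i => e (r i))) ^ 2)]
    rw [Fintype.sum_prod_type]
    congr 1; funext i
    rw [Fintype.sum_prod_type]
    congr 1; funext j
    congr 1; funext k
    congr 2
    funext i'; fin_cases i' <;> rfl
  have hnn : (0:ℝ) ≤ ∑ i : Fin n, ∑ j : Fin n, ∑ k : Fin n, (S ![e i, e j, e k]) ^ 2 :=
    Finset.sum_nonneg fun i _ => Finset.sum_nonneg fun j _ => Finset.sum_nonneg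
      fun k _ => sq_nonneg _
  have hvsq : (∑ j : Fin n, (v j) ^ 2) = ‖v‖ ^ 2 := by
    have : ‖v‖ = Real.sqrt (∑ j : Fin n, ‖v j‖ ^ 2) := by
      rw [EuclideanSpace.norm_eq]
    rw [this, Real.sq_sqrt (by positivity)]
    simp [sq_abs]
  have h1 : (S ![v,v,v])^2 ≤ (‖v‖^3)^2 * ((frob3 S)^2) := by
    rw [expand]
    calc (∑ r ∈ Fintype.piFinset (fun _ : Fin 3 => (univ : Finset (Fin n))),
        (∏ i : Fin 3, v (r i)) * S (fun i => e (r i))) ^ 2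
        ≤ _ := CS
      _ = (‖v‖^3)^2 * ((frob3 S)^2) := by
          rw [hA, hB, hvsq, frob3, Real.sq_sqrt hnn]; ring
  calc |S ![v,v,v]| = Real.sqrt ((S ![v,v,v])^2) := (Real.sqrt_sq_eq_abs _).symm
    _ ≤ Real.sqrt ((‖v‖^3)^2 * ((frob3 S)^2)) := Real.sqrt_le_sqrt h1
    _ = ‖v‖^3 * frob3 S := by
        have hf0 : (0:ℝ) ≤ frob3 S := by rw [frob3]; exact Real.sqrt_nonneg _
        rw [Real.sqrt_mul (sq_nonneg _), Real.sqrt_sq (by positivity), Real.sqrt_sq hf0]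
    _ = frob3 S * ‖v‖^3 := mul_comm _ _

lemma slot0 (T : ContinuousMultilinearMap ℝ (fun _ : Fin 3 => EuclideanSpace ℝ (Fin n)) ℝ)
    (a b c d : EuclideanSpace ℝ (Fin n)) :
    T ![a + b, c, d] = T ![a, c, d] + T ![b, c, d] := by
  have h : ∀ z : EuclideanSpace ℝ (Fin n),
      (![z, c, d] : Fin 3 → _) = Function.update ![a, c, d] 0 z := by
    intro z; funext i; fin_cases i <;> simp [Function.update]
  rw [h (a+b), h a, h b, T.map_update_add]; simp [Function.update_idem]

lemma slot1 (T : ContinuousMultilinearMap ℝ (fun _ : Fin 3 => EuclideanSpace ℝ (Fin n)) ℝ)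
    (a b c d : EuclideanSpace ℝ (Fin n)) :
    T ![c, a + b, d] = T ![c, a, d] + T ![c, b, d] := by
  have h : ∀ z : EuclideanSpace ℝ (Fin n),
      (![c, z, d] : Fin 3 → _) = Function.update ![c, a, d] 1 z := by
    intro z; funext i; fin_cases i <;> simp [Function.update]
  rw [h (a+b), h a, h b, T.map_update_add]; simp [Function.update_idem]

lemma slot2 (T : ContinuousMultilinearMap ℝ (fun _ : Fin 3 => EuclideanSpace ℝ (Fin n)) ℝ)
    (a b c d : EuclideanSpace ℝ (Fin n)) :
    T ![c, d, a + b] = T ![c, d, a] + T ![c, d, b] := by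
  have h : ∀ z : EuclideanSpace ℝ (Fin n),
      (![c, d, z] : Fin 3 → _) = Function.update ![c, d, a] 2 z := by
    intro z; funext i; fin_cases i <;> simp [Function.update]
  rw [h (a+b), h a, h b, T.map_update_add]; simp [Function.update_idem]

lemma opbound (T : ContinuousMultilinearMap ℝ (fun _ : Fin 3 => EuclideanSpace ℝ (Fin n)) ℝ)
    (a b c : EuclideanSpace ℝ (Fin n)) :
    |T ![a, b, c]| ≤ ‖T‖ * (‖a‖ * ‖b‖ * ‖c‖) := by
  have := T.le_opNorm ![a, b, c]
  rw [Fin.prod_univ_three] at this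
  simpa using this

lemma hess_lam (H : EuclideanSpace ℝ (Fin n) →L[ℝ] EuclideanSpace ℝ (Fin n) →L[ℝ] ℝ)
    (hs : ∀ u w, H u w = H w u) (hpsd : ∀ u, 0 ≤ H u u) :
    ∃ lam > (0:ℝ), ∀ w ∈ (LinearMap.ker (H : EuclideanSpace ℝ (Fin n) →ₗ[ℝ] (EuclideanSpace ℝ (Fin n) →L[ℝ] ℝ)))ᗮ, lam * ‖w‖ ^ 2 ≤ H w w := by
  classical
  set K : Submodule ℝ (EuclideanSpace ℝ (Fin n)) := LinearMap.ker (H : EuclideanSpace ℝ (Fin n) →ₗ[ℝ] (EuclideanSpace ℝ (Fin n) →L[ℝ] ℝ)) with hK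
  have hker0 : ∀ u, H u u = 0 → u ∈ K := by
    intro u hu
    rw [hK, LinearMap.mem_ker]
    ext w
    by_contra hb
    set b : ℝ := H u w with hbdef
    have hbne : b ≠ 0 := by simpa using hb
    set a : ℝ := H w w with hadef
    have ha : 0 ≤ a := hpsd w
    have key : ∀ t : ℝ, 0 ≤ t^2 * a + 2*t*b := by
      intro t
      have h0 := hpsd (u + t • w)
      have : H (u + t • w) (u + t • w) = H u u + t * H u w + t * H w u + t^2 * H w w := by
        simp [map_add, ContinuousLinearMap.add_apply, map_smul, ContinuousLinearMap.smul_apply,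
          smul_eq_mul]
        ring
      rw [this, hu, hs w u] at h0
      linarith
    have h := key (-b/(a+1))
    have ha1 : (0:ℝ) < a + 1 := by linarith
    have hb2 : (0:ℝ) < b^2 := by positivity
    field_simp at h
    have h' : 0 < b^2 * (a + 2) := mul_pos hb2 (by linarith)
    nlinarith [mul_pos (mul_pos hb2 ha1) (show (0:ℝ) < a + 2 by linarith)]
  by_cases hbot : Kᗮ = ⊥
  · exact ⟨1, one_pos, fun w hw => by
      rw [hbot, Submodule.mem_bot] at hw
      simp [hw]⟩
  · obtain ⟨w₀, hw₀K, hw₀ne⟩ := Submodule.exists_mem_ne_zero_of_ne_bot hbot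
    set S : Set (EuclideanSpace ℝ (Fin n)) := (Kᗮ : Set _) ∩ Metric.sphere 0 1 with hSdef
    have hScompact : IsCompact S := by
      apply (isCompact_sphere (0 : EuclideanSpace ℝ (Fin n)) 1).inter_left
      exact (Submodule.closed_of_finiteDimensional Kᗮ)
    have hSne : S.Nonempty := by
      refine ⟨‖w₀‖⁻¹ • w₀, Submodule.smul_mem _ _ hw₀K, ?_⟩
      simp [norm_smul, norm_ne_zero_iff.mpr hw₀ne, inv_mul_cancel₀]
    have hcont : ContinuousOn (fun w => H w w) S :=
      (H.continuous.clm_apply continuous_id).continuousOn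
    obtain ⟨wm, hwmS, hwmmin⟩ := hScompact.exists_isMinOn hSne hcont
    set lam : ℝ := H wm wm with hlam
    have hwmK : wm ∈ Kᗮ := hwmS.1
    have hwmnorm : ‖wm‖ = 1 := by simpa using hwmS.2
    have hlampos : 0 < lam := by
      rcases lt_or_eq_of_le (hpsd wm) with h | h
      · exact h
      · exfalso
        have hm : wm ∈ K := hker0 wm h.symm
        have : wm = 0 := by
          have h2 : (inner ℝ wm wm : ℝ) = 0 :=
            Submodule.inner_right_of_mem_orthogonal (K := K) hm hwmK
          exact inner_self_eq_zero.mp h2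
        rw [this] at hwmnorm; simp at hwmnorm
    refine ⟨lam, hlampos, fun w hw => ?_⟩
    rcases eq_or_ne w 0 with rfl | hwne
    · simp
    · have hn : ‖w‖ ≠ 0 := norm_ne_zero_iff.mpr hwne
      set wh := ‖w‖⁻¹ • w with hwh
      have hwhS : wh ∈ S := by
        refine ⟨Submodule.smul_mem _ _ hw, ?_⟩
        simp [hwh, norm_smul, hn, inv_mul_cancel₀]
      have hmin := hwmmin hwhS
      have hexp : H wh wh = ‖w‖⁻¹^2 * H w w := by
        simp [hwh, map_smul, ContinuousLinearMap.smul_apply, smul_eq_mul]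
        ring
      have hle : lam ≤ ‖w‖⁻¹^2 * H w w := by
        rw [← hexp]; exact hmin
      have hpos : (0:ℝ) < ‖w‖^2 := by positivity
      have h2 := mul_le_mul_of_nonneg_right hle (le_of_lt hpos)
      calc lam * ‖w‖^2 ≤ (‖w‖⁻¹^2 * H w w) * ‖w‖^2 := h2
        _ = H w w := by field_simp

lemma poly_step {G g : ℝ → ℝ} {c₀ c₁ c₂ c₃ : ℝ}
    (hG : ∀ t, HasDerivAt G (g t) t)
    (hb : ∀ t ∈ Icc (0:ℝ) 1, c₀ + c₁*t + c₂*t^2 + c₃*t^3 ≤ g t) :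
    ∀ t ∈ Icc (0:ℝ) 1, G 0 + c₀*t + c₁*t^2/2 + c₂*t^3/3 + c₃*t^4/4 ≤ G t := by
  intro t ht
  set P : ℝ → ℝ := fun s => G 0 + c₀*s + c₁*s^2/2 + c₂*s^3/3 + c₃*s^4/4 with hP
  have hPd : ∀ s : ℝ, HasDerivAt P (c₀ + c₁*s + c₂*s^2 + c₃*s^3) s := by
    intro s
    have : HasDerivAt (fun u : ℝ => G 0 + c₀*u + c₁*u^2/2 + c₂*u^3/3 + c₃*u^4/4)
        (0 + c₀*1 + c₁*(2*s^1)/2 + c₂*(3*s^2)/3 + c₃*(4*s^3)/4) s :=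
      (((((hasDerivAt_const s (G 0)).add ((hasDerivAt_id s).const_mul c₀)).add
        (((hasDerivAt_pow 2 s).const_mul c₁).div_const 2)).add
        (((hasDerivAt_pow 3 s).const_mul c₂).div_const 3)).add
        (((hasDerivAt_pow 4 s).const_mul c₃).div_const 4))
    convert this using 1 <;> ring
  have hD : ∀ s, HasDerivAt (fun u => G u - P u) (g s - (c₀ + c₁*s + c₂*s^2 + c₃*s^3)) s :=
    fun s => (hG s).sub (hPd s)
  have mono : MonotoneOn (fun u => G u - P u) (Icc (0:ℝ) 1) := by
    apply monotoneOn_of_deriv_nonneg (convex_Icc 0 1)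
    · exact Continuous.continuousOn
        (Differentiable.continuous (fun s => (hD s).differentiableAt))
    · intro s _; exact (hD s).differentiableAt.differentiableWithinAt
    · intro s hs
      rw [(hD s).deriv]
      have := hb s (mem_Icc_of_Ioo (by simpa [interior_Icc] using hs))
      linarith
  have h0 : (fun u => G u - P u) 0 ≤ (fun u => G u - P u) t :=
    mono (left_mem_Icc.mpr zero_le_one) ht ht.1
  simp only [hP] at h0
  linarith

lemma taylor3 {φ ψ χ θ : ℝ → ℝ} {Kc : ℝ}
    (hφ : ∀ t, HasDerivAt φ (ψ t) t) (hψ : ∀ t, HasDerivAt ψ (χ t) t)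
    (hχ : ∀ t, HasDerivAt χ (θ t) t)
    (hθ : ∀ t ∈ Icc (0:ℝ) 1, θ 0 - Kc ≤ θ t) :
    φ 0 + ψ 0 + χ 0 / 2 + θ 0 / 6 - Kc / 6 ≤ φ 1 := by
  have s1 := poly_step (c₀ := θ 0 - Kc) (c₁ := 0) (c₂ := 0) (c₃ := 0) hχ
    (fun t ht => by simpa using hθ t ht)
  have s2 := poly_step (c₀ := χ 0) (c₁ := θ 0 - Kc) (c₂ := 0) (c₃ := 0) hψ
    (fun t ht => by have := s1 t ht; linarith)
  have s3 := poly_step (c₀ := ψ 0) (c₁ := χ 0) (c₂ := (θ 0 - Kc)/2) (c₃ := 0) hφ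
    (fun t ht => by have := s2 t ht; nlinarith [sq_nonneg t])
  have := s3 1 (right_mem_Icc.mpr zero_le_one)
  linarith

lemma iterated3_eq (f : EuclideanSpace ℝ (Fin n) → ℝ) (z a b c : EuclideanSpace ℝ (Fin n)) :
    iteratedFDeriv ℝ 3 f z ![a, b, c] = fderiv ℝ (fderiv ℝ (fderiv ℝ f)) z a b c := by
  have h1 : iteratedFDeriv ℝ 3 f z ![a,b,c]
      = iteratedFDeriv ℝ 2 (fderiv ℝ f) z (Fin.init ![a,b,c]) (![a,b,c] (Fin.last 2)) :=
    iteratedFDeriv_succ_apply_right _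
  rw [h1, iteratedFDeriv_two_apply]
  congr 1

end Aux

set_option maxHeartbeats 8000000 in
theorem third_order_condition_sufficient {n : ℕ} (f : EuclideanSpace ℝ (Fin n) → ℝ) (L : ℝ)
    (hf : ContDiff ℝ 3 f)
    (hLip : ∀ x y, frob3 (iteratedFDeriv ℝ 3 f x - iteratedFDeriv ℝ 3 f y) ≤ L * ‖x - y‖)
    (x : EuclideanSpace ℝ (Fin n))
    (hgrad : gradient f x = 0)
    (hpsd : ∀ u, 0 ≤ iteratedFDeriv ℝ 2 f x ![u, u])
    (hker : ∀ u, (∀ w, iteratedFDeriv ℝ 2 f x ![u, w] = 0) →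
      iteratedFDeriv ℝ 3 f x ![u, u, u] = 0) :
    ∃ C > 0, ∃ ε > 0, ∀ y, ‖y - x‖ ≤ ε → f y ≥ f x - C * ‖y - x‖ ^ 4 := by
  classical
  set H : EuclideanSpace ℝ (Fin n) →L[ℝ] EuclideanSpace ℝ (Fin n) →L[ℝ] ℝ :=
    fderiv ℝ (fderiv ℝ f) x with hHdef
  set T := iteratedFDeriv ℝ 3 f x with hTdef
  set M := ‖T‖ with hMdef
  have hM0 : 0 ≤ M := norm_nonneg _
  have hsymm : ∀ u w, H u w = H w u := fun u w =>
    (hf.contDiffAt.isSymmSndFDerivAt (by norm_num)) u w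
  have hpsd' : ∀ u, 0 ≤ H u u := fun u => by
    have h := hpsd u
    rw [iteratedFDeriv_two_apply] at h
    simpa using h
  obtain ⟨lam, hlam, hlamle⟩ := hess_lam H hsymm hpsd'
  set K : Submodule ℝ (EuclideanSpace ℝ (Fin n)) := LinearMap.ker (H : EuclideanSpace ℝ (Fin n) →ₗ[ℝ] (EuclideanSpace ℝ (Fin n) →L[ℝ] ℝ)) with hKdef
  -- the first derivative vanishes
  have hfd0 : fderiv ℝ f x = 0 := by
    have h := congrArg (InnerProductSpace.toDual ℝ (EuclideanSpace ℝ (Fin n))) hgrad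
    rw [gradient] at h
    simpa using h
  refine ⟨M^2/(8*lam) + |L|/6 + 1, by positivity, 1, one_pos, ?_⟩
  intro y hy
  set v := y - x with hvdef
  have hxy : x + v = y := by rw [hvdef]; abel
  -- orthogonal decomposition
  set u₁ : EuclideanSpace ℝ (Fin n) := (K.orthogonalProjectionOnto v : EuclideanSpace ℝ (Fin n))
    with hu₁def
  set u₂ := v - u₁ with hu₂def
  have hveq : u₁ + u₂ = v := by rw [hu₂def]; abel
  have hu₁K : u₁ ∈ K := (K.orthogonalProjectionOnto v).2
  have hu₂K : u₂ ∈ Kᗮ := Submodule.sub_starProjection_mem_orthogonal (K := K) v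
  have hinner : (inner ℝ u₁ u₂ : ℝ) = 0 :=
    Submodule.inner_right_of_mem_orthogonal hu₁K hu₂K
  have hnormsq : ‖v‖^2 = ‖u₁‖^2 + ‖u₂‖^2 := by
    rw [← hveq, norm_add_sq_real, hinner]; ring
  have hu1 : ‖u₁‖ ≤ ‖v‖ := by
    have h : ‖u₁‖^2 ≤ ‖v‖^2 := by rw [hnormsq]; linarith [sq_nonneg ‖u₂‖]
    calc ‖u₁‖ = Real.sqrt (‖u₁‖^2) := (Real.sqrt_sq (norm_nonneg _)).symm
      _ ≤ Real.sqrt (‖v‖^2) := Real.sqrt_le_sqrt h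
      _ = ‖v‖ := Real.sqrt_sq (norm_nonneg _)
  have hu2 : ‖u₂‖ ≤ ‖v‖ := by
    have h : ‖u₂‖^2 ≤ ‖v‖^2 := by rw [hnormsq]; linarith [sq_nonneg ‖u₁‖]
    calc ‖u₂‖ = Real.sqrt (‖u₂‖^2) := (Real.sqrt_sq (norm_nonneg _)).symm
      _ ≤ Real.sqrt (‖v‖^2) := Real.sqrt_le_sqrt h
      _ = ‖v‖ := Real.sqrt_sq (norm_nonneg _)
  have hHu₁ : H u₁ = 0 := LinearMap.mem_ker.mp hu₁K
  -- Hessian lower bound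
  have hHvv : lam * ‖u₂‖^2 ≤ H v v := by
    have e1 : H v v = H u₂ u₂ := by
      calc H v v = H (u₁ + u₂) v := by rw [hveq]
        _ = H u₁ v + H u₂ v := by
            rw [map_add H u₁ u₂, ContinuousLinearMap.add_apply]
        _ = H u₂ v := by rw [hHu₁]; simp
        _ = H u₂ (u₁ + u₂) := by rw [hveq]
        _ = H u₂ u₁ + H u₂ u₂ := map_add _ _ _
        _ = H u₂ u₂ := by rw [hsymm u₂ u₁, hHu₁]; simp
    rw [e1]; exact hlamle u₂ hu₂K
  -- cubic term lower bound
  have hT0 : T ![u₁, u₁, u₁] = 0 := by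
    refine hker u₁ (fun w => ?_)
    rw [iteratedFDeriv_two_apply]
    show H _ _ = 0
    simp [hHu₁]
  have hsplit : T ![v,v,v]
      = T ![u₁,u₁,u₁] + T ![u₁,u₁,u₂] + T ![u₁,u₂,u₁+u₂] + T ![u₂,u₁+u₂,u₁+u₂] := by
    have s : T ![u₁+u₂, u₁+u₂, u₁+u₂]
        = T ![u₁,u₁,u₁] + T ![u₁,u₁,u₂] + T ![u₁,u₂,u₁+u₂] + T ![u₂,u₁+u₂,u₁+u₂] := by
      rw [slot0, slot1, slot2]; try ring
    calc T ![v,v,v] = T ![u₁+u₂, u₁+u₂, u₁+u₂] := by rw [hveq]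
      _ = _ := s
  have hb1 : |T ![u₁,u₁,u₂]| ≤ M * (‖u₂‖ * ‖v‖ * ‖v‖) := by
    calc |T ![u₁,u₁,u₂]| ≤ M * (‖u₁‖ * ‖u₁‖ * ‖u₂‖) := opbound T u₁ u₁ u₂
      _ ≤ M * (‖v‖ * ‖v‖ * ‖u₂‖) := by gcongr
      _ = M * (‖u₂‖ * ‖v‖ * ‖v‖) := by ring
  have hb2 : |T ![u₁,u₂,u₁+u₂]| ≤ M * (‖u₂‖ * ‖v‖ * ‖v‖) := by
    rw [hveq]
    calc |T ![u₁,u₂,v]| ≤ M * (‖u₁‖ * ‖u₂‖ * ‖v‖) := opbound T u₁ u₂ v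
      _ ≤ M * (‖v‖ * ‖u₂‖ * ‖v‖) := by gcongr
      _ = M * (‖u₂‖ * ‖v‖ * ‖v‖) := by ring
  have hb3 : |T ![u₂,u₁+u₂,u₁+u₂]| ≤ M * (‖u₂‖ * ‖v‖ * ‖v‖) := by
    rw [hveq]
    exact opbound T u₂ v v
  have hTlow : -(3 * M * (‖u₂‖ * ‖v‖ * ‖v‖)) ≤ T ![v,v,v] := by
    rw [hsplit, hT0]
    have n1 := neg_abs_le (T ![u₁,u₁,u₂])
    have n2 := neg_abs_le (T ![u₁,u₂,u₁+u₂])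
    have n3 := neg_abs_le (T ![u₂,u₁+u₂,u₁+u₂])
    linarith
  -- Taylor expansion along the segment
  have hγ : ∀ t : ℝ, HasDerivAt (fun t : ℝ => x + t • v) v t := fun t => by
    simpa using ((hasDerivAt_id t).smul_const v).const_add x
  set γ : ℝ → EuclideanSpace ℝ (Fin n) := fun t => x + t • v with hγdef
  have hγ0 : γ 0 = x := by simp [hγdef]
  have hγ1 : γ 1 = y := by rw [hγdef]; simpa using hxy
  have hf1 : Differentiable ℝ f := hf.differentiable (by norm_num)
  have hd1 : ∀ t : ℝ, HasDerivAt (fun t => f (γ t)) (fderiv ℝ f (γ t) v) t := fun t =>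
    (hf1 (γ t)).hasFDerivAt.comp_hasDerivAt t (hγ t)
  have hf2 : Differentiable ℝ (fderiv ℝ f) :=
    (hf.fderiv_right (m := 2) (by norm_num)).differentiable (by norm_num)
  have hd2 : ∀ t : ℝ, HasDerivAt (fun t => fderiv ℝ f (γ t) v)
      (fderiv ℝ (fderiv ℝ f) (γ t) v v) t := fun t => by
    have h := ((hf2 (γ t)).hasFDerivAt.comp_hasDerivAt t (hγ t))
    have := (ContinuousLinearMap.apply ℝ ℝ v).hasFDerivAt.comp_hasDerivAt t h
    exact this
  have hf3 : Differentiable ℝ (fderiv ℝ (fderiv ℝ f)) := by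
    have h2 : ContDiff ℝ 2 (fderiv ℝ f) := hf.fderiv_right (m := 2) (by norm_num)
    exact (h2.fderiv_right (m := 1) (by norm_num)).differentiable (by norm_num)
  have hd3 : ∀ t : ℝ, HasDerivAt (fun t => fderiv ℝ (fderiv ℝ f) (γ t) v v)
      (fderiv ℝ (fderiv ℝ (fderiv ℝ f)) (γ t) v v v) t := fun t => by
    have h := (HasFDerivAt.comp_hasDerivAt (E := EuclideanSpace ℝ (Fin n) →L[ℝ] EuclideanSpace ℝ (Fin n) →L[ℝ] ℝ) t (hf3 (γ t)).hasFDerivAt (hγ t))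
    have h2 := (ContinuousLinearMap.apply ℝ
      (EuclideanSpace ℝ (Fin n) →L[ℝ] ℝ) v).hasFDerivAt.comp_hasDerivAt t h
    have h3 := (ContinuousLinearMap.apply ℝ ℝ v).hasFDerivAt.comp_hasDerivAt t h2
    exact h3
  -- third derivative deviation bound
  have hθb : ∀ t ∈ Icc (0:ℝ) 1,
      fderiv ℝ (fderiv ℝ (fderiv ℝ f)) (γ 0) v v v - |L| * ‖v‖^4
        ≤ fderiv ℝ (fderiv ℝ (fderiv ℝ f)) (γ t) v v v := by
    intro t ht
    have hdiff : fderiv ℝ (fderiv ℝ (fderiv ℝ f)) (γ t) v v v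
        - fderiv ℝ (fderiv ℝ (fderiv ℝ f)) (γ 0) v v v
        = (iteratedFDeriv ℝ 3 f (γ t) - iteratedFDeriv ℝ 3 f (γ 0)) ![v,v,v] := by
      rw [ContinuousMultilinearMap.sub_apply, iterated3_eq, iterated3_eq]
    have habs : |(iteratedFDeriv ℝ 3 f (γ t) - iteratedFDeriv ℝ 3 f (γ 0)) ![v,v,v]|
        ≤ |L| * ‖v‖^4 := by
      have h1 := frob3_bound (iteratedFDeriv ℝ 3 f (γ t) - iteratedFDeriv ℝ 3 f (γ 0)) v
      have h2 := hLip (γ t) (γ 0)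
      have hnormγ : ‖γ t - γ 0‖ = t * ‖v‖ := by
        rw [hγ0, hγdef]
        simp only [add_sub_cancel_left]
        rw [norm_smul]
        simp [abs_of_nonneg ht.1]
      have hfnn : (0:ℝ) ≤ frob3 (iteratedFDeriv ℝ 3 f (γ t) - iteratedFDeriv ℝ 3 f (γ 0)) := by
        rw [frob3]; exact Real.sqrt_nonneg _
      have hLt : L * (t * ‖v‖) ≤ |L| * ‖v‖ := by
        have h3 : L * (t * ‖v‖) ≤ |L| * (t * ‖v‖) :=
          mul_le_mul_of_nonneg_right (le_abs_self L)
            (mul_nonneg ht.1 (norm_nonneg _))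
        have h4 : |L| * (t * ‖v‖) ≤ |L| * ‖v‖ := by
          apply mul_le_mul_of_nonneg_left _ (abs_nonneg L)
          calc t * ‖v‖ ≤ 1 * ‖v‖ := mul_le_mul_of_nonneg_right ht.2 (norm_nonneg _)
            _ = ‖v‖ := one_mul _
        linarith
      calc |(iteratedFDeriv ℝ 3 f (γ t) - iteratedFDeriv ℝ 3 f (γ 0)) ![v,v,v]|
          ≤ frob3 (iteratedFDeriv ℝ 3 f (γ t) - iteratedFDeriv ℝ 3 f (γ 0)) * ‖v‖^3 := h1
        _ ≤ (L * (t * ‖v‖)) * ‖v‖^3 := by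
            apply mul_le_mul_of_nonneg_right _ (by positivity)
            rw [← hnormγ]; exact h2
        _ ≤ (|L| * ‖v‖) * ‖v‖^3 :=
            mul_le_mul_of_nonneg_right hLt (by positivity)
        _ = |L| * ‖v‖^4 := by ring
    have := neg_abs_le ((iteratedFDeriv ℝ 3 f (γ t) - iteratedFDeriv ℝ 3 f (γ 0)) ![v,v,v])
    linarith [hdiff ▸ (le_trans this (le_of_eq rfl))]
  have htay := taylor3 (φ := fun t => f (γ t)) (ψ := fun t => fderiv ℝ f (γ t) v)
    (χ := fun t => fderiv ℝ (fderiv ℝ f) (γ t) v v)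
    (θ := fun t => fderiv ℝ (fderiv ℝ (fderiv ℝ f)) (γ t) v v v)
    (Kc := |L| * ‖v‖^4) hd1 hd2 hd3 hθb
  -- identify the terms at 0
  have e0 : f (γ 0) = f x := by rw [hγ0]
  have e1' : fderiv ℝ f (γ 0) v = 0 := by rw [hγ0, hfd0]; simp
  have e2 : fderiv ℝ (fderiv ℝ f) (γ 0) v v = H v v := by rw [hγ0]
  have e3 : fderiv ℝ (fderiv ℝ (fderiv ℝ f)) (γ 0) v v v = T ![v,v,v] := by
    rw [hγ0, hTdef]; exact (iterated3_eq f x v v v).symm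
  have e4 : f (γ 1) = f y := by rw [hγ1]
  rw [e0, e1', e2, e3, e4] at htay
  -- combine everything
  have hfinal : f x + (lam * ‖u₂‖^2) / 2 + (-(3 * M * (‖u₂‖ * ‖v‖ * ‖v‖))) / 6
      - (|L| * ‖v‖^4) / 6 ≤ f y := by
    have d2 : (lam * ‖u₂‖^2) / 2 ≤ H v v / 2 := by linarith
    have d3 : (-(3 * M * (‖u₂‖ * ‖v‖ * ‖v‖))) / 6 ≤ T ![v,v,v] / 6 := by linarith
    linarith
  have hAM : lam * ‖u₂‖^2 / 2 - (M/2) * ‖u₂‖ * ‖v‖^2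
      ≥ -(M^2/(8*lam)) * ‖v‖^4 := by
    have h8 : (0:ℝ) < 8*lam := by linarith
    have key : (0:ℝ) ≤ (2*lam*‖u₂‖ - M*‖v‖^2)^2 := sq_nonneg _
    have expand : (2*lam*‖u₂‖ - M*‖v‖^2)^2
        = 8*lam*(lam * ‖u₂‖^2 / 2 - (M/2) * ‖u₂‖ * ‖v‖^2) + M^2*‖v‖^4 := by ring
    have e : -(M^2/(8*lam)) * ‖v‖^4 = (-(M^2*‖v‖^4))/(8*lam) := by ring
    rw [ge_iff_le, e, div_le_iff₀ h8]
    nlinarith [key, expand]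
  have hMterm : (-(3 * M * (‖u₂‖ * ‖v‖ * ‖v‖))) / 6 = -((M/2) * ‖u₂‖ * ‖v‖^2) := by ring
  show f y ≥ f x - (M^2/(8*lam) + |L|/6 + 1) * ‖v‖ ^ 4
  have hv4 : (0:ℝ) ≤ ‖v‖^4 := by positivity
  nlinarith [hfinal, hAM, hv4]
end

section
/- Let f be a homogeneous degree-4 polynomial on ℝⁿ with f(z) < 0 for some unit vector z, and g(x) = f(x) + ‖x‖⁶. Then x = 0 is not a fourth order local minimum of g: g(0) - g(tz) = -f(z)t⁴ - t⁶ ≥ (|f(z)|/2)t⁴ for all small t > 0, violating the fourth order condition. -/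
theorem negative_direction_not_fourth_order_min {n : ℕ}
    (f : EuclideanSpace ℝ (Fin n) → ℝ)
    (hhom : ∀ (t : ℝ) (x : EuclideanSpace ℝ (Fin n)), f (t • x) = t ^ 4 * f x)
    (z : EuclideanSpace ℝ (Fin n)) (hz : ‖z‖ = 1) (hfz : f z < 0)
    (g : EuclideanSpace ℝ (Fin n) → ℝ) (hg : ∀ x, g x = f x + ‖x‖ ^ 6) :
    (∃ t₀ > (0 : ℝ), ∀ t : ℝ, 0 < t → t ≤ t₀ →
      g 0 - g (t • z) ≥ |f z| / 2 * t ^ 4) ∧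
    ¬ (∃ C > (0 : ℝ), ∃ ε > (0 : ℝ), ∀ y : EuclideanSpace ℝ (Fin n),
        ‖y‖ ≤ ε → g y ≥ g 0 - C * ‖y‖ ^ 5) := by
  have hf0 : f 0 = 0 := by
    have := hhom 0 0
    simpa using this
  have hg0 : g 0 = 0 := by simp [hg, hf0]
  have hA : 0 < |f z| := abs_pos.mpr (ne_of_lt hfz)
  have habs : |f z| = -f z := abs_of_neg hfz
  have hgt : ∀ t : ℝ, 0 < t → g (t • z) = f z * t ^ 4 + t ^ 6 := by
    intro t ht
    have hn : ‖t • z‖ = t := by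
      rw [norm_smul, hz, Real.norm_eq_abs, abs_of_pos ht]; ring
    rw [hg, hhom, hn]; ring
  constructor
  · refine ⟨Real.sqrt (|f z| / 2), Real.sqrt_pos.mpr (by linarith), ?_⟩
    intro t ht hle
    have ht2 : t ^ 2 ≤ |f z| / 2 := by
      have := Real.sq_sqrt (le_of_lt (show (0:ℝ) < |f z| / 2 by linarith))
      nlinarith [Real.sqrt_nonneg (|f z| / 2)]
    rw [hg0, hgt t ht]
    have ht4 : 0 < t ^ 4 := by positivity
    nlinarith [sq_nonneg t, sq_nonneg (t^2)]
  · rintro ⟨C, hC, ε, hε, h⟩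
    set t : ℝ := min ε (min (Real.sqrt (|f z| / 4)) (|f z| / (4 * C))) with htdef
    have hsq : 0 < Real.sqrt (|f z| / 4) := Real.sqrt_pos.mpr (by linarith)
    have ht : 0 < t := lt_min hε (lt_min hsq (by positivity))
    have htε : t ≤ ε := min_le_left _ _
    have ht1 : t ≤ Real.sqrt (|f z| / 4) := le_trans (min_le_right _ _) (min_le_left _ _)
    have ht2 : t ≤ |f z| / (4 * C) := le_trans (min_le_right _ _) (min_le_right _ _)
    have hts : t ^ 2 ≤ |f z| / 4 := by
      have := Real.sq_sqrt (le_of_lt (show (0:ℝ) < |f z| / 4 by linarith))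
      nlinarith
    have htC : C * t ≤ |f z| / 4 := by
      have := (le_div_iff₀ (show (0:ℝ) < 4*C by positivity)).mp ht2
      nlinarith
    have hn : ‖t • z‖ = t := by
      rw [norm_smul, hz, Real.norm_eq_abs, abs_of_pos ht]; ring
    have := h (t • z) (by rw [hn]; exact htε)
    rw [hgt t ht, hg0, hn] at this
    -- f z * t^4 + t^6 ≥ - C * t^5
    have ht4 : 0 < t ^ 4 := by positivity
    nlinarith [sq_nonneg t, mul_pos ht4 ht]
end

section
/- Let f be a homogeneous degree-4 polynomial on ℝⁿ and g(x) = f(x) + ‖x‖⁶. If x ≠ 0 is a fourth order local minimum of g, then f(x) < 0. Consequently if f is nonnegative, 0 is the only candidate fourth order local minimum of g. -/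
theorem fourth_order_min_of_regularized_quartic_negative {n : ℕ}
    (f : EuclideanSpace ℝ (Fin n) → ℝ)
    (hhom : ∀ (t : ℝ) (x : EuclideanSpace ℝ (Fin n)), f (t • x) = t ^ 4 * f x)
    (g : EuclideanSpace ℝ (Fin n) → ℝ) (hg : ∀ x, g x = f x + ‖x‖ ^ 6) :
    (∀ x : EuclideanSpace ℝ (Fin n), x ≠ 0 →
      (∃ C > (0 : ℝ), ∃ ε > (0 : ℝ), ∀ y, ‖y - x‖ ≤ ε → g y ≥ g x - C * ‖y - x‖ ^ 5) →
      f x < 0) ∧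
    ((∀ y, 0 ≤ f y) →
      ∀ x : EuclideanSpace ℝ (Fin n),
        (∃ C > (0 : ℝ), ∃ ε > (0 : ℝ), ∀ y, ‖y - x‖ ≤ ε → g y ≥ g x - C * ‖y - x‖ ^ 5) →
        x = 0) := by
  have main : ∀ x : EuclideanSpace ℝ (Fin n), x ≠ 0 →
      (∃ C > (0 : ℝ), ∃ ε > (0 : ℝ), ∀ y, ‖y - x‖ ≤ ε → g y ≥ g x - C * ‖y - x‖ ^ 5) →
      f x < 0 := by
    rintro x hx ⟨C, hC, ε, hε, H⟩
    by_contra hfa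
    push_neg at hfa
    have hxn : 0 < ‖x‖ := norm_pos_iff.mpr hx
    set b : ℝ := ‖x‖ ^ 6 with hb
    have hbpos : 0 < b := by positivity
    have hden : (0 : ℝ) < 2 * C * ‖x‖ ^ 5 + 1 := by positivity
    set h : ℝ := min (min 1 (ε / ‖x‖)) (b / (2 * C * ‖x‖ ^ 5 + 1)) with hh
    have hpos : 0 < h :=
      lt_min (lt_min one_pos (by positivity)) (by positivity)
    have h1 : h ≤ 1 := le_trans (min_le_left _ _) (min_le_left _ _)
    have h2 : h ≤ ε / ‖x‖ := le_trans (min_le_left _ _) (min_le_right _ _)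
    have h3 : h ≤ b / (2 * C * ‖x‖ ^ 5 + 1) := min_le_right _ _
    have h3' : h * (2 * C * ‖x‖ ^ 5 + 1) ≤ b := (le_div_iff₀ hden).mp h3
    have hyx : (1 - h) • x - x = (-h) • x := by
      rw [sub_smul, one_smul, neg_smul]; abel
    have hnorm : ‖(1 - h) • x - x‖ = h * ‖x‖ := by
      rw [hyx, norm_smul, Real.norm_eq_abs, abs_neg, abs_of_pos hpos]
    have key := H ((1 - h) • x) (by
      rw [hnorm]
      calc h * ‖x‖ ≤ (ε / ‖x‖) * ‖x‖ := by
            exact mul_le_mul_of_nonneg_right h2 (le_of_lt hxn)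
        _ = ε := by field_simp)
    have hnorm2 : ‖(1 - h) • x‖ = (1 - h) * ‖x‖ := by
      rw [norm_smul, Real.norm_eq_abs, abs_of_nonneg (by linarith)]
    rw [hg, hg, hhom, hnorm, hnorm2] at key
    -- key : (1-h)^4 * f x + ((1-h)*‖x‖)^6 ≥ f x + ‖x‖^6 - C * (h*‖x‖)^5
    have e1 : (1 - h) ^ 4 ≤ 1 := pow_le_one₀ (by linarith) (by linarith)
    have e2 : (1 - h) ^ 6 ≤ (1 - h) ^ 1 :=
      pow_le_pow_of_le_one (by linarith) (by linarith) (by norm_num)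
    rw [pow_one] at e2
    have hq : b * h ≤ C * h ^ 5 * ‖x‖ ^ 5 := by
      have expand : ((1 - h) * ‖x‖) ^ 6 = (1 - h) ^ 6 * b := by ring
      have expand2 : (h * ‖x‖) ^ 5 = h ^ 5 * ‖x‖ ^ 5 := by ring
      rw [expand, expand2] at key
      nlinarith [mul_nonneg hfa (sub_nonneg.mpr e1),
        mul_le_mul_of_nonneg_right e2 (le_of_lt hbpos)]
    have hq2 : b ≤ C * h ^ 4 * ‖x‖ ^ 5 := by
      have := (mul_le_mul_iff_of_pos_right hpos).mp (by nlinarith : b * h ≤ (C * h ^ 4 * ‖x‖ ^ 5) * h)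
      linarith
    have h4le : h ^ 4 ≤ h := by nlinarith [pow_le_one₀ (le_of_lt hpos) h1 (n := 3), hpos.le]
    have hCx : 0 ≤ C * ‖x‖ ^ 5 := by positivity
    nlinarith [mul_le_mul_of_nonneg_left h4le hCx,
      mul_le_mul_of_nonneg_right h4le (mul_nonneg hC.le (by positivity : (0:ℝ) ≤ ‖x‖ ^ 5))]
  refine ⟨main, fun hf x hx => ?_⟩
  by_contra hx0
  exact absurd (hf x) (not_le.mpr (main x hx0 hx))
end
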